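/- Suppose the stepsize equals γ* = (4/25)·μ / (K·L·(μ + L)). Then for every k ≥ 0 the IAG iterates satisfy ‖x^k − x*‖ ≤ (1 − c_K/(Q + 1)²)^k · ‖x^0 − x*‖, where c_K = (2/25) / (K·(2K + 1)) and Q = L/μ. -/

import Mathlib

open Finset InnerProductSpace

section AuxGradient

variable {E : Type*} [NormedAddCommGroup E] [InnerProductSpace ℝ E] [CompleteSpace E]

lemma my_hasGradientAt_sum {ι : Type*} (s : Finset ι) (f : ι → E → ℝ) (g : ι → E) (x : E)
    (h : ∀ i ∈ s, HasGradientAt (f i) (g i) x) :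
    HasGradientAt (fun y => ∑ i ∈ s, f i y) (∑ i ∈ s, g i) x := by
  rw [hasGradientAt_iff_hasFDerivAt, map_sum]
  exact HasFDerivAt.fun_sum fun i hi => (h i hi)

lemma my_hasGradientAt_sub (f g : E → ℝ) (f' g' x : E)
    (hf : HasGradientAt f f' x) (hg : HasGradientAt g g' x) :
    HasGradientAt (fun y => f y - g y) (f' - g') x := by
  rw [hasGradientAt_iff_hasFDerivAt, map_sub]
  exact HasFDerivAt.sub hf hg

lemma my_hasGradientAt_normsq (μ : ℝ) (x : E) :
    HasGradientAt (fun y : E => μ / 2 * ‖y‖ ^ 2) (μ • x) x := by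
  have h1 : HasFDerivAt (fun y : E => (inner ℝ y y : ℝ))
      ((fderivInnerCLM ℝ (x, x)).comp ((ContinuousLinearMap.id ℝ E).prod
        (ContinuousLinearMap.id ℝ E))) x :=
    (hasFDerivAt_id x).inner ℝ (hasFDerivAt_id x)
  have h2 : HasFDerivAt (fun y : E => μ / 2 * (inner ℝ y y : ℝ))
      ((μ/2) • ((fderivInnerCLM ℝ (x, x)).comp ((ContinuousLinearMap.id ℝ E).prod
        (ContinuousLinearMap.id ℝ E)))) x := h1.const_mul _
  have heq : (fun y : E => μ / 2 * ‖y‖ ^ 2) = fun y : E => μ / 2 * (inner ℝ y y : ℝ) := by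
    funext y; rw [real_inner_self_eq_norm_sq]
  rw [hasGradientAt_iff_hasFDerivAt, heq]
  refine h2.congr_fderiv ?_
  ext v
  simp [fderivInnerCLM_apply, real_inner_smul_left, real_inner_comm]
  ring

lemma my_gradient_mono (φ : E → ℝ) (hc : ConvexOn ℝ Set.univ φ)
    (hd : Differentiable ℝ φ) (a b : E) :
    0 ≤ (inner ℝ (gradient φ a - gradient φ b) (a - b) : ℝ) := by
  set ℓ : ℝ →ᵃ[ℝ] E := AffineMap.lineMap b a with hℓ
  set ψ : ℝ → ℝ := fun t => φ (ℓ t) with hψ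
  have hψc : ConvexOn ℝ Set.univ ψ := by
    have := hc.comp_affineMap ℓ
    rw [Set.preimage_univ] at this; exact this
  have key : ∀ t : ℝ, HasDerivAt ψ (inner ℝ (gradient φ (ℓ t)) (a - b) : ℝ) t := by
    intro t
    have hline : HasDerivAt (fun t : ℝ => ℓ t) (a - b) t := by
      have : HasDerivAt (fun t : ℝ => t • (a - b) + b) (a - b) t := by
        simpa using ((hasDerivAt_id t).smul_const (a - b)).add_const b
      simpa [hℓ, AffineMap.lineMap_apply, vsub_eq_sub, vadd_eq_add] using this
    have hφ : HasFDerivAt φ (toDual ℝ E (gradient φ (ℓ t))) (ℓ t) :=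
      (hd (ℓ t)).hasGradientAt
    have := hφ.comp_hasDerivAt t hline
    simp [toDual_apply_apply] at this ⊢; exact this
  have hmono : MonotoneOn (deriv ψ) Set.univ :=
    hψc.monotoneOn_deriv fun t _ => (key t).differentiableAt
  have h01 : deriv ψ 0 ≤ deriv ψ 1 :=
    hmono (Set.mem_univ 0) (Set.mem_univ 1) zero_le_one
  rw [(key 0).deriv, (key 1).deriv] at h01
  have h0 : ℓ 0 = b := AffineMap.lineMap_apply_zero b a
  have h1 : ℓ 1 = a := AffineMap.lineMap_apply_one b a
  rw [h0, h1] at h01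
  rw [inner_sub_left]
  linarith

end AuxGradient

section AuxNum

lemma my_num1 (μ L : ℝ) (hμ : 0 < μ) (hμL : μ ≤ L) : 4 * μ ^ 2 ≤ (μ + L) ^ 2 := by
  nlinarith [hμ.le, hμL]

lemma my_num2 (μ L Kr : ℝ) (hμ : 0 < μ) (hμL : μ ≤ L) (hK : 1 ≤ Kr) :
    Kr * L * (μ + L) ≤ Kr * (μ + L) ^ 2 := by
  have hL : 0 < L := lt_of_lt_of_le hμ hμL
  have h9 : L * (μ + L) ≤ (μ + L) ^ 2 := by nlinarith [hμ.le, hL.le]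
  calc Kr * L * (μ + L) = Kr * (L * (μ + L)) := by ring
    _ ≤ Kr * ((μ + L) ^ 2) := mul_le_mul_of_nonneg_left h9 (by linarith)
    _ = Kr * (μ + L) ^ 2 := by ring

lemma my_num3 (μ L Kr : ℝ) (hμ : 0 < μ) (hμL : μ ≤ L) (hK : 1 ≤ Kr) :
    4 / 25 * μ ^ 2 ≤ 4 / 25 * (Kr * L * (μ + L)) := by
  have hL : 0 < L := lt_of_lt_of_le hμ hμL
  have s1 : μ ^ 2 ≤ L * (μ + L) := by nlinarith [hμ.le, hμL]
  have s2 : L * (μ + L) ≤ Kr * (L * (μ + L)) :=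
    le_mul_of_one_le_left (by positivity) hK
  have : μ ^ 2 ≤ Kr * L * (μ + L) := by
    calc μ ^ 2 ≤ L * (μ + L) := s1
      _ ≤ Kr * (L * (μ + L)) := s2
      _ = Kr * L * (μ + L) := by ring
  linarith

lemma my_num4 (μ L Kr : ℝ) (hμ : 0 < μ) (hμL : μ ≤ L) (hK : 1 ≤ Kr) :
    4 / 25 * μ * L ^ 2 ≤ 4 / 25 * μ * (Kr * L * (μ + L)) := by
  have hL : 0 < L := lt_of_lt_of_le hμ hμL
  have s1 : L ^ 2 ≤ L * (μ + L) := by nlinarith [hμ.le, hL.le]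
  have s2 : L * (μ + L) ≤ Kr * (L * (μ + L)) :=
    le_mul_of_one_le_left (by positivity) hK
  have s3 : L ^ 2 ≤ Kr * L * (μ + L) := by
    calc L ^ 2 ≤ L * (μ + L) := s1
      _ ≤ Kr * (L * (μ + L)) := s2
      _ = Kr * L * (μ + L) := by ring
  have := mul_le_mul_of_nonneg_left s3 (show (0:ℝ) ≤ 4 / 25 * μ by positivity)
  linarith

lemma my_num5 (γ μ L N I G2 : ℝ) (hγ : 0 < γ) (hμ : 0 < μ) (hN : 0 ≤ N)
    (hGd : μ * N ^ 2 ≤ I) (hG2 : G2 ≤ (L * N) ^ 2)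
    (hγL2 : γ * L ^ 2 ≤ 4 / 25 * μ) :
    N ^ 2 - 2 * (γ * I) + γ ^ 2 * G2 ≤ ((1 - 23 / 25 * (γ * μ)) * N) ^ 2 := by
  nlinarith [mul_le_mul_of_nonneg_left hGd hγ.le,
    mul_le_mul_of_nonneg_left hG2 (sq_nonneg γ),
    mul_nonneg (mul_nonneg hγ.le (sub_nonneg.mpr hγL2)) (sq_nonneg N),
    sq_nonneg (γ * μ * N)]

end AuxNum

set_option maxHeartbeats 1600000 in
/-- Explicit linear rate of the IAG method with the stepsize `γ* = (4/25)μ/(KL(μ+L))`: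
the distance to the optimum contracts with rate `1 - c_K/(Q+1)²`. -/
theorem iag_explicit_rate_dist
    (n m : ℕ) (hm : 1 ≤ m)
    (f : Fin m → EuclideanSpace ℝ (Fin n) → ℝ)
    (Li : Fin m → ℝ) (hLi : ∀ i, 0 ≤ Li i)
    (L : ℝ) (hL : L = ∑ i, Li i)
    (hconv : ∀ i, ConvexOn ℝ Set.univ (f i))
    (hdiff : ∀ i, Differentiable ℝ (f i))
    (hlip : ∀ i y z, ‖gradient (f i) y - gradient (f i) z‖ ≤ Li i * ‖y - z‖)
    (K : ℕ) (hK : 1 ≤ K)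
    (τ : Fin m → ℕ → ℕ)
    (hτ : ∀ i k, k - K ≤ τ i k ∧ τ i k ≤ k)
    (hτ0 : ∀ i, τ i 0 = 0)
    (F : EuclideanSpace ℝ (Fin n) → ℝ) (hF : F = fun y => ∑ i, f i y)
    (x g e : ℕ → EuclideanSpace ℝ (Fin n))
    (hg : ∀ k, g k = ∑ i, gradient (f i) (x (τ i k)))
    (he : ∀ k, e k = g k - gradient F (x k))
    (γ : ℝ) (hγ : 0 < γ)
    (hx : ∀ k, x (k + 1) = x k - γ • g k)
    (μ : ℝ) (hμ : 0 < μ) (hμL : μ ≤ L)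
    (hsc : ConvexOn ℝ Set.univ (fun y => F y - μ / 2 * ‖y‖ ^ 2))
    (xs : EuclideanSpace ℝ (Fin n))
    (hmin : ∀ y, F xs ≤ F y) (hgxs : gradient F xs = 0)
    (hγstar : γ = (4 / 25) * μ / (K * L * (μ + L))) :
    ∀ k, ‖x k - xs‖ ≤
      (1 - ((2 / 25) / (K * (2 * K + 1))) / (L / μ + 1) ^ 2) ^ k * ‖x 0 - xs‖ := by
  have hLpos : 0 < L := lt_of_lt_of_le hμ hμL
  have hKr : (1:ℝ) ≤ (K:ℝ) := by exact_mod_cast hK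
  have hKpos : (0:ℝ) < (K:ℝ) := by linarith
  have hμLpos : 0 < μ + L := by linarith
  -- gradient of F
  have hgradF : ∀ y, gradient F y = ∑ i, gradient (f i) y := by
    intro y
    rw [hF]
    exact (my_hasGradientAt_sum Finset.univ f (fun i => gradient (f i) y) y
      (fun i _ => ((hdiff i) y).hasGradientAt)).gradient
  have hFdiff : Differentiable ℝ F := by
    rw [hF]; exact Differentiable.fun_sum fun i _ => hdiff i
  have hlipF : ∀ y z : EuclideanSpace ℝ (Fin n),
      ‖gradient F y - gradient F z‖ ≤ L * ‖y - z‖ := by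
    intro y z
    rw [hgradF, hgradF, ← Finset.sum_sub_distrib]
    calc ‖∑ i, (gradient (f i) y - gradient (f i) z)‖
        ≤ ∑ i, ‖gradient (f i) y - gradient (f i) z‖ := norm_sum_le _ _
      _ ≤ ∑ i, Li i * ‖y - z‖ := Finset.sum_le_sum fun i _ => hlip i y z
      _ = L * ‖y - z‖ := by rw [← Finset.sum_mul, hL]
  -- strong monotonicity of the gradient at xs
  have hsm : ∀ y : EuclideanSpace ℝ (Fin n),
      μ * ‖y - xs‖ ^ 2 ≤ (inner ℝ (gradient F y) (y - xs) : ℝ) := by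
    intro y
    have hgh : ∀ z, gradient (fun y => F y - μ / 2 * ‖y‖ ^ 2) z = gradient F z - μ • z :=
      fun z => (my_hasGradientAt_sub _ _ _ _ z (hFdiff z).hasGradientAt
        (my_hasGradientAt_normsq μ z)).gradient
    have hdh : Differentiable ℝ (fun y => F y - μ / 2 * ‖y‖ ^ 2) := fun z =>
      ((hFdiff z).sub (my_hasGradientAt_normsq μ z).differentiableAt)
    have hmn := my_gradient_mono _ hsc hdh y xs
    rw [hgh, hgh, hgxs] at hmn
    have hexp : (gradient F y - μ • y) - (0 - μ • xs) = gradient F y - μ • (y - xs) := by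
      rw [smul_sub]; abel
    rw [hexp, inner_sub_left, real_inner_smul_left, real_inner_self_eq_norm_sq] at hmn
    linarith
  -- constants
  set c : ℝ := ((2 / 25) / ((K:ℝ) * (2 * (K:ℝ) + 1))) / (L / μ + 1) ^ 2 with hc_def
  set ρ : ℝ := 1 - c with hρ_def
  set D : ℝ := ‖x 0 - xs‖ with hD_def
  have hD0 : 0 ≤ D := norm_nonneg _
  set T : ℝ := μ ^ 2 / ((K:ℝ) * (μ + L) ^ 2) with hT_def
  have hTpos : 0 < T := by rw [hT_def]; positivity
  have hc_eq : c = (2 / 25) * T / (2 * (K:ℝ) + 1) := by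
    rw [hc_def, hT_def]
    have hμne : μ ≠ 0 := ne_of_gt hμ
    field_simp
    ring
  have hcpos : 0 < c := by rw [hc_eq]; positivity
  have hc2 : c ≤ (2 / 75) * T := by
    rw [hc_eq]
    calc (2 / 25) * T / (2 * (K:ℝ) + 1) ≤ (2 / 25) * T / 3 :=
          div_le_div_of_nonneg_left (by positivity) (by norm_num) (by linarith)
      _ = (2 / 75) * T := by ring
  have hKT : (K:ℝ) * T ≤ 1 / 4 := by
    have h1 : (K:ℝ) * T = μ ^ 2 / (μ + L) ^ 2 := by
      rw [hT_def]; field_simp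
    rw [h1, div_le_iff₀ (by positivity)]
    linarith [my_num1 μ L hμ hμL]
  have hKc : (K:ℝ) * c ≤ 1 / 150 := by
    have h1 : (K:ℝ) * c ≤ (K:ℝ) * (2 / 75 * T) := mul_le_mul_of_nonneg_left hc2 hKpos.le
    have h2 : (K:ℝ) * (2 / 75 * T) = 2 / 75 * ((K:ℝ) * T) := by ring
    rw [h2] at h1
    linarith [hKT]
  have hT14 : T ≤ 1 / 4 := by
    linarith [hKT, mul_nonneg (sub_nonneg.mpr hKr) hTpos.le]
  have hcsmall : c ≤ 1 / 150 := by linarith [hc2, hT14, hTpos]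
  have hρpos : 0 < ρ := by rw [hρ_def]; linarith
  have hρ1 : ρ ≤ 1 := by rw [hρ_def]; linarith
  have hBern : (74 / 75 : ℝ) ≤ ρ ^ (2 * K) := by
    have h := one_add_mul_le_pow (a := -c) (by linarith) (2 * K)
    have hcast : ((2 * K : ℕ) : ℝ) = 2 * (K:ℝ) := by push_cast; ring
    rw [hcast] at h
    have h1 : (74 / 75 : ℝ) ≤ 1 + 2 * (K:ℝ) * (-c) := by linarith [hKc]
    have h2 : (1:ℝ) + -c = ρ := by rw [hρ_def]; ring
    rw [h2] at h
    linarith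
  -- stepsize facts
  have hγμT : (4 / 25) * T ≤ γ * μ := by
    have hd1 := div_le_div_of_nonneg_left (a := 4 / 25 * μ ^ 2)
      (show (0:ℝ) ≤ 4 / 25 * μ ^ 2 by positivity)
      (show (0:ℝ) < (K:ℝ) * L * (μ + L) by positivity)
      (my_num2 μ L (K:ℝ) hμ hμL hKr)
    calc (4 / 25) * T = 4 / 25 * μ ^ 2 / ((K:ℝ) * (μ + L) ^ 2) := by rw [hT_def]; ring
      _ ≤ 4 / 25 * μ ^ 2 / ((K:ℝ) * L * (μ + L)) := hd1
      _ = γ * μ := by rw [hγstar]; ring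
  have hγμ425 : γ * μ ≤ 4 / 25 := by
    have h1 : γ * μ = 4 / 25 * μ ^ 2 / ((K:ℝ) * L * (μ + L)) := by rw [hγstar]; ring
    rw [h1, div_le_iff₀ (by positivity)]
    linarith [my_num3 μ L (K:ℝ) hμ hμL hKr]
  have hγL2 : γ * L ^ 2 ≤ (4 / 25) * μ := by
    rw [hγstar, div_mul_eq_mul_div, div_le_iff₀ (by positivity)]
    linarith [my_num4 μ L (K:ℝ) hμ hμL hKr]
  set p : ℝ := 1 - (23 / 25) * (γ * μ) with hp_def
  have hp0 : 0 ≤ p := by rw [hp_def]; linarith [hγμ425]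
  have hρp : p ≤ ρ := by
    rw [hρ_def, hp_def]
    linarith [hc2, hγμT, hTpos.le]
  have h2rp : 0 ≤ ρ - p := sub_nonneg.mpr hρp
  have hBkey : γ ^ 2 * (K:ℝ) * L ^ 2 ≤ (ρ - p) * ρ ^ (2 * K) := by
    have hB : γ ^ 2 * (K:ℝ) * L ^ 2 = (16 / 625) * T := by
      rw [hγstar, hT_def]
      field_simp
      ring
    have hρp' : ρ - p = (23 / 25) * (γ * μ) - c := by rw [hρ_def, hp_def]; ring
    have h1 : (226 / 1875) * T ≤ ρ - p := by rw [hρp']; linarith [hγμT, hc2]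
    calc γ ^ 2 * (K:ℝ) * L ^ 2 = (16 / 625) * T := hB
      _ ≤ (226 / 1875) * T * (74 / 75) := by linarith [hTpos.le]
      _ ≤ (ρ - p) * ρ ^ (2 * K) := mul_le_mul h1 hBern (by norm_num) h2rp
  -- contraction of the exact gradient step
  have hcontr : ∀ y : EuclideanSpace ℝ (Fin n),
      ‖y - γ • gradient F y - xs‖ ≤ p * ‖y - xs‖ := by
    intro y
    have hGd := hsm y
    have hGn : ‖gradient F y‖ ≤ L * ‖y - xs‖ := by
      have := hlipF y xs; rwa [hgxs, sub_zero] at this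
    have hre : y - γ • gradient F y - xs = (y - xs) - γ • gradient F y := by abel
    have hsq : ‖y - γ • gradient F y - xs‖ ^ 2 ≤ (p * ‖y - xs‖) ^ 2 := by
      rw [hre, norm_sub_sq_real]
      have e1 : (inner ℝ (y - xs) (γ • gradient F y) : ℝ) =
          γ * (inner ℝ (gradient F y) (y - xs) : ℝ) := by
        rw [real_inner_smul_right, real_inner_comm]
      have e2 : ‖γ • gradient F y‖ ^ 2 = γ ^ 2 * ‖gradient F y‖ ^ 2 := by
        rw [norm_smul, Real.norm_eq_abs, abs_of_pos hγ, mul_pow]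
      rw [e1, e2]
      have hG2 : ‖gradient F y‖ ^ 2 ≤ (L * ‖y - xs‖) ^ 2 :=
        pow_le_pow_left₀ (norm_nonneg _) hGn 2
      rw [hp_def]
      exact my_num5 γ μ L ‖y - xs‖ _ _ hγ hμ (norm_nonneg _) hGd hG2 hγL2
    have h0 : 0 ≤ p * ‖y - xs‖ := mul_nonneg hp0 (norm_nonneg _)
    have := Real.sqrt_le_sqrt hsq
    rwa [Real.sqrt_sq (norm_nonneg _), Real.sqrt_sq h0] at this
  -- bound on the aggregated gradient under the induction hypothesis
  have hgb : ∀ j : ℕ, (∀ l, l ≤ j → ‖x l - xs‖ ≤ ρ ^ l * D) →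
      ‖g j‖ ≤ L * (ρ ^ (j - K) * D) := by
    intro j hIH
    have h0 : g j = ∑ i, (gradient (f i) (x (τ i j)) - gradient (f i) xs) := by
      rw [hg, Finset.sum_sub_distrib]
      have hz : ∑ i, gradient (f i) xs = 0 := by rw [← hgradF]; exact hgxs
      rw [hz, sub_zero]
    rw [h0]
    calc ‖∑ i, (gradient (f i) (x (τ i j)) - gradient (f i) xs)‖
        ≤ ∑ i, ‖gradient (f i) (x (τ i j)) - gradient (f i) xs‖ := norm_sum_le _ _
      _ ≤ ∑ i, Li i * (ρ ^ (j - K) * D) := by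
          apply Finset.sum_le_sum
          intro i _
          calc ‖gradient (f i) (x (τ i j)) - gradient (f i) xs‖
              ≤ Li i * ‖x (τ i j) - xs‖ := hlip i _ _
            _ ≤ Li i * (ρ ^ (j - K) * D) := by
                apply mul_le_mul_of_nonneg_left _ (hLi i)
                calc ‖x (τ i j) - xs‖ ≤ ρ ^ (τ i j) * D := hIH _ (hτ i j).2
                  _ ≤ ρ ^ (j - K) * D := by
                      apply mul_le_mul_of_nonneg_right _ hD0
                      exact pow_le_pow_of_le_one hρpos.le hρ1 (hτ i j).1
      _ = L * (ρ ^ (j - K) * D) := by rw [← Finset.sum_mul, hL]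
  -- telescoping
  have htel : ∀ a b : ℕ, a ≤ b → ‖x b - x a‖ ≤ ∑ j ∈ Finset.Ico a b, (γ * ‖g j‖) := by
    intro a b hab
    induction b, hab using Nat.le_induction with
    | base => simp
    | succ b hab ih =>
      have hsp : x (b + 1) - x a = (x (b + 1) - x b) + (x b - x a) := by abel
      have hstep : ‖x (b + 1) - x b‖ = γ * ‖g b‖ := by
        rw [hx b]
        have h1 : x b - γ • g b - x b = -(γ • g b) := by abel
        rw [h1, norm_neg, norm_smul, Real.norm_eq_abs, abs_of_pos hγ]
      rw [hsp]
      calc ‖(x (b + 1) - x b) + (x b - x a)‖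
          ≤ ‖x (b + 1) - x b‖ + ‖x b - x a‖ := norm_add_le _ _
        _ ≤ γ * ‖g b‖ + ∑ j ∈ Finset.Ico a b, (γ * ‖g j‖) := by
            rw [hstep]; exact add_le_add_right ih _
        _ = ∑ j ∈ Finset.Ico a (b + 1), (γ * ‖g j‖) := by
            rw [Finset.sum_Ico_succ_top hab]; ring
  -- main induction
  suffices H : ∀ k, ∀ l, l ≤ k → ‖x l - xs‖ ≤ ρ ^ l * D by
    intro k; exact H k k le_rfl
  intro k
  induction k with
  | zero =>
    intro l hl
    have : l = 0 := Nat.le_zero.mp hl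
    subst this
    simp [hD_def]
  | succ k ih =>
    intro l hl
    by_cases hlk : l ≤ k
    · exact ih l hlk
    · have hl1 : l = k + 1 := by omega
      subst hl1
      have hsplit : x (k + 1) - xs = (x k - γ • gradient F (x k) - xs) - γ • e k := by
        rw [hx k, he k, smul_sub]; abel
      have hcb : ‖x k - γ • gradient F (x k) - xs‖ ≤ p * (ρ ^ k * D) := by
        calc ‖x k - γ • gradient F (x k) - xs‖ ≤ p * ‖x k - xs‖ := hcontr (x k)
          _ ≤ p * (ρ ^ k * D) := mul_le_mul_of_nonneg_left (ih k le_rfl) hp0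
      have hnn : (0:ℝ) ≤ γ * (L * (ρ ^ (k - 2 * K) * D)) :=
        mul_nonneg hγ.le (mul_nonneg hLpos.le (mul_nonneg (pow_nonneg hρpos.le _) hD0))
      have heb : ‖e k‖ ≤ (K:ℝ) * (γ * (L * (ρ ^ (k - 2 * K) * D))) * L := by
        have h0 : e k = ∑ i, (gradient (f i) (x (τ i k)) - gradient (f i) (x k)) := by
          rw [he k, hg k, hgradF, ← Finset.sum_sub_distrib]
        rw [h0]
        calc ‖∑ i, (gradient (f i) (x (τ i k)) - gradient (f i) (x k))‖
            ≤ ∑ i, ‖gradient (f i) (x (τ i k)) - gradient (f i) (x k)‖ := norm_sum_le _ _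
          _ ≤ ∑ i, Li i * ((K:ℝ) * (γ * (L * (ρ ^ (k - 2 * K) * D)))) := by
              apply Finset.sum_le_sum
              intro i _
              refine (hlip i _ _).trans (mul_le_mul_of_nonneg_left ?_ (hLi i))
              have h3 : ‖x k - x (τ i k)‖ ≤ ∑ j ∈ Finset.Ico (τ i k) k, (γ * ‖g j‖) :=
                htel _ _ (hτ i k).2
              have h4 : ∑ j ∈ Finset.Ico (τ i k) k, (γ * ‖g j‖)
                  ≤ ∑ _j ∈ Finset.Ico (τ i k) k, (γ * (L * (ρ ^ (k - 2 * K) * D))) := by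
                apply Finset.sum_le_sum
                intro j hj
                have hjmem := Finset.mem_Ico.mp hj
                apply mul_le_mul_of_nonneg_left _ hγ.le
                have h5 : ‖g j‖ ≤ L * (ρ ^ (j - K) * D) :=
                  hgb j (fun l hlj => ih l (by omega))
                calc ‖g j‖ ≤ L * (ρ ^ (j - K) * D) := h5
                  _ ≤ L * (ρ ^ (k - 2 * K) * D) := by
                      apply mul_le_mul_of_nonneg_left _ hLpos.le
                      apply mul_le_mul_of_nonneg_right _ hD0
                      apply pow_le_pow_of_le_one hρpos.le hρ1
                      have h6 := (hτ i k).1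
                      omega
              have h7 : (Finset.Ico (τ i k) k).card = k - τ i k := Nat.card_Ico _ _
              calc ‖x (τ i k) - x k‖ = ‖x k - x (τ i k)‖ := norm_sub_rev _ _
                _ ≤ ∑ j ∈ Finset.Ico (τ i k) k, (γ * ‖g j‖) := h3
                _ ≤ ∑ _j ∈ Finset.Ico (τ i k) k, (γ * (L * (ρ ^ (k - 2 * K) * D))) := h4
                _ = ((k - τ i k : ℕ) : ℝ) * (γ * (L * (ρ ^ (k - 2 * K) * D))) := by
                    rw [Finset.sum_const, h7, nsmul_eq_mul]
                _ ≤ (K:ℝ) * (γ * (L * (ρ ^ (k - 2 * K) * D))) := by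
                    apply mul_le_mul_of_nonneg_right _ hnn
                    have h8 : k - τ i k ≤ K := by have := (hτ i k).1; omega
                    exact_mod_cast h8
          _ = (K:ℝ) * (γ * (L * (ρ ^ (k - 2 * K) * D))) * L := by
              rw [← Finset.sum_mul, hL]; ring
      have hρk : (0:ℝ) ≤ ρ ^ k := pow_nonneg hρpos.le k
      have hBpos : (0:ℝ) ≤ ρ ^ (k - 2 * K) := pow_nonneg hρpos.le _
      have hpow : ρ ^ (k - 2 * K) * ρ ^ (2 * K) ≤ ρ ^ k := by
        rw [← pow_add]
        exact pow_le_pow_of_le_one hρpos.le hρ1 (by omega)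
      have h7 : γ ^ 2 * (K:ℝ) * L ^ 2 * ρ ^ (k - 2 * K) ≤ (ρ - p) * ρ ^ k := by
        calc γ ^ 2 * (K:ℝ) * L ^ 2 * ρ ^ (k - 2 * K)
            ≤ ((ρ - p) * ρ ^ (2 * K)) * ρ ^ (k - 2 * K) :=
              mul_le_mul_of_nonneg_right hBkey hBpos
          _ = (ρ - p) * (ρ ^ (k - 2 * K) * ρ ^ (2 * K)) := by ring
          _ ≤ (ρ - p) * ρ ^ k := mul_le_mul_of_nonneg_left hpow h2rp
      calc ‖x (k + 1) - xs‖
          = ‖(x k - γ • gradient F (x k) - xs) - γ • e k‖ := by rw [hsplit]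
        _ ≤ ‖x k - γ • gradient F (x k) - xs‖ + ‖γ • e k‖ := norm_sub_le _ _
        _ ≤ p * (ρ ^ k * D) + γ * ((K:ℝ) * (γ * (L * (ρ ^ (k - 2 * K) * D))) * L) := by
            apply add_le_add hcb
            rw [norm_smul, Real.norm_eq_abs, abs_of_pos hγ]
            exact mul_le_mul_of_nonneg_left heb hγ.le
        _ = (p * ρ ^ k + γ ^ 2 * (K:ℝ) * L ^ 2 * ρ ^ (k - 2 * K)) * D := by ring
        _ ≤ ρ ^ (k + 1) * D := by
            apply mul_le_mul_of_nonneg_right _ hD0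
            have : ρ ^ (k + 1) = ρ ^ k * ρ := pow_succ ρ k
            rw [this]
            linarith [h7]
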